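/- Let (a_n)_{n≥1} be a nondecreasing sequence of nonnegative reals and let r ∈ (0,1). Then Σ_{n≥1} n a_n r^{n−1} ≥ (1/(1−r)) Σ_{n≥1} a_n r^{n−1} (with both sides possibly infinite). -/

import Mathlib

/-- If `(a_n)_{n ≥ 1}` is a nondecreasing sequence of nonnegative reals and
`r ∈ (0,1)`, then `Σ_{n≥1} n a_n r^(n−1) ≥ (1/(1−r)) Σ_{n≥1} a_n r^(n−1)`,
both sides possibly infinite (sums taken in `ℝ≥0∞`; here `a n` plays the role
of `a_{n+1}`). -/
theorem tsum_weighted_geometric_lower_bound (a : ℕ → ℝ) (ha0 : ∀ n, 0 ≤ a n)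
    (hmono : Monotone a) (r : ℝ) (hr : r ∈ Set.Ioo (0:ℝ) 1) :
    ENNReal.ofReal (1 / (1 - r)) * ∑' n : ℕ, ENNReal.ofReal (a n * r ^ n)
      ≤ ∑' n : ℕ, ENNReal.ofReal ((n + 1) * a n * r ^ n) := by
  obtain ⟨hr0, hr1⟩ := hr
  have hgeo : ENNReal.ofReal (1 / (1 - r)) = ∑' k : ℕ, ENNReal.ofReal (r ^ k) := by
    rw [one_div, ← tsum_geometric_of_lt_one hr0.le hr1]
    exact ENNReal.ofReal_tsum_of_nonneg (fun n => pow_nonneg hr0.le n)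
      (summable_geometric_of_lt_one hr0.le hr1)
  rw [hgeo, ← ENNReal.tsum_mul_right]
  have h1 : ∀ k : ℕ, ENNReal.ofReal (r ^ k) * ∑' n : ℕ, ENNReal.ofReal (a n * r ^ n)
      = ∑' n : ℕ, ENNReal.ofReal (a n * r ^ (k + n)) := by
    intro k
    rw [← ENNReal.tsum_mul_left]
    congr 1; funext n
    rw [← ENNReal.ofReal_mul (pow_nonneg hr0.le k)]
    congr 1; rw [pow_add]; ring
  calc ∑' k : ℕ, ENNReal.ofReal (r ^ k) * ∑' n : ℕ, ENNReal.ofReal (a n * r ^ n)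
      = ∑' k : ℕ, ∑' n : ℕ, ENNReal.ofReal (a n * r ^ (k + n)) := by
        exact tsum_congr h1
    _ ≤ ∑' k : ℕ, ∑' n : ℕ, ENNReal.ofReal (a (k + n) * r ^ (k + n)) := by
        refine ENNReal.tsum_le_tsum fun k => ENNReal.tsum_le_tsum fun n => ?_
        exact ENNReal.ofReal_le_ofReal
          (mul_le_mul_of_nonneg_right (hmono (Nat.le_add_left n k)) (pow_nonneg hr0.le _))
    _ = ∑' p : ℕ × ℕ, ENNReal.ofReal (a (p.1 + p.2) * r ^ (p.1 + p.2)) := by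
        exact (ENNReal.tsum_prod' (f := fun p : ℕ × ℕ =>
          ENNReal.ofReal (a (p.1 + p.2) * r ^ (p.1 + p.2)))).symm
    _ = ∑' x : (Σ n : ℕ, Finset.HasAntidiagonal.antidiagonal n),
          ENNReal.ofReal (a (x.2.1.1 + x.2.1.2) * r ^ (x.2.1.1 + x.2.1.2)) := by
        rw [← Finset.HasAntidiagonal.sigmaAntidiagonalEquivProd.tsum_eq
          (fun p : ℕ × ℕ => ENNReal.ofReal (a (p.1 + p.2) * r ^ (p.1 + p.2)))]
        rfl
    _ = ∑' n : ℕ, ∑ p ∈ Finset.HasAntidiagonal.antidiagonal n, ENNReal.ofReal (a (p.1 + p.2) * r ^ (p.1 + p.2)) := by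
        rw [ENNReal.tsum_sigma']
        refine tsum_congr fun n => ?_
        refine (tsum_fintype _).trans ?_
        exact Finset.sum_coe_sort (Finset.HasAntidiagonal.antidiagonal n)
          (fun p => ENNReal.ofReal (a (p.1 + p.2) * r ^ (p.1 + p.2)))
    _ = ∑' n : ℕ, ∑ _p ∈ Finset.HasAntidiagonal.antidiagonal n, ENNReal.ofReal (a n * r ^ n) := by
        refine tsum_congr fun n => Finset.sum_congr rfl fun p hp => ?_
        rw [Finset.HasAntidiagonal.mem_antidiagonal] at hp
        rw [hp]
    _ ≤ ∑' n : ℕ, ENNReal.ofReal ((n + 1) * a n * r ^ n) := by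
        refine ENNReal.tsum_le_tsum fun n => ?_
        rw [Finset.sum_const, Finset.Nat.card_antidiagonal, nsmul_eq_mul, mul_assoc,
          ← ENNReal.ofReal_natCast (n + 1), ← ENNReal.ofReal_mul (by positivity)]
        apply ENNReal.ofReal_le_ofReal
        push_cast; ring_nf; exact le_refl _
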